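/- For every exponent α > 0 there exists a constant C = C(α) > 0 such that for all complex numbers a, b one has | (a+b)|a+b|^α − a|a|^α − b|b|^α | ≤ C ( |a| |b|^α + |b| |a|^α ). -/
import Mathlib


open Real

-- subadditivity for p ≤ 1 over reals
lemma aux_subadd {p x y : ℝ} (hp : 0 ≤ p) (hp1 : p ≤ 1) (hx : 0 ≤ x) (hy : 0 ≤ y) :
    (x + y) ^ p ≤ x ^ p + y ^ p := by
  have := NNReal.rpow_add_le_add_rpow (x.toNNReal) (y.toNNReal) hp hp1
  have h := NNReal.coe_le_coe.2 this
  rw [NNReal.coe_add, NNReal.coe_rpow, NNReal.coe_rpow, NNReal.coe_rpow,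
    NNReal.coe_add, Real.coe_toNNReal _ hx, Real.coe_toNNReal _ hy] at h
  exact h

lemma aux_small {p u v : ℝ} (hp : 0 ≤ p) (hp1 : p ≤ 1) (hu : 0 ≤ u) (huv : u ≤ v) :
    v ^ p - u ^ p ≤ (v - u) ^ p := by
  have h := aux_subadd hp hp1 hu (by linarith : (0:ℝ) ≤ v - u)
  rw [add_sub_cancel] at h
  linarith

lemma aux_big {p u v : ℝ} (hp : 1 ≤ p) (hu : 0 ≤ u) (huv : u ≤ v) :
    v ^ p - u ^ p ≤ p * v ^ (p - 1) * (v - u) := by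
  rcases eq_or_lt_of_le (hu.trans huv) with hv | hv
  · rw [← hv] at huv ⊢
    have hu0 : u = 0 := le_antisymm huv hu
    simp [hu0, Real.zero_rpow (by positivity : p ≠ 0)]
  · have hs : (-1:ℝ) ≤ u / v - 1 := by
      have : 0 ≤ u / v := div_nonneg hu hv.le
      linarith
    have hb := one_add_mul_self_le_rpow_one_add hs hp
    rw [add_sub_cancel] at hb
    have hdiv : (u / v) ^ p = u ^ p / v ^ p := Real.div_rpow hu hv.le p
    rw [hdiv] at hb
    have hvp : (0:ℝ) < v ^ p := Real.rpow_pos_of_pos hv p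
    have h1 : v ^ p * (1 + p * (u / v - 1)) ≤ u ^ p := by
      rw [le_div_iff₀ hvp] at hb
      linarith [hb]
    have hvp1 : v ^ (p - 1) = v ^ p / v := by
      rw [Real.rpow_sub hv, Real.rpow_one]
    rw [hvp1]
    have h2 : v * (u / v) = u := by field_simp
    have h3 : p * (v ^ p / v) * (v - u) = p * v ^ p * (1 - u / v) := by
      field_simp
    rw [h3]
    nlinarith [h1, hvp]

set_option maxHeartbeats 1000000 in
lemma aux_key (α : ℝ) (hα : 0 < α) (a b : ℂ) (hba : ‖b‖ ≤ ‖a‖) :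
    ‖(a + b) * ((‖a + b‖ ^ α : ℝ) : ℂ) - a * ((‖a‖ ^ α : ℝ) : ℂ) -
          b * ((‖b‖ ^ α : ℝ) : ℂ)‖ ≤
        ((α + 3) * 2 ^ α + 1) * (‖a‖ * ‖b‖ ^ α + ‖b‖ * ‖a‖ ^ α) := by
  set A := ‖a‖ with hA
  set B := ‖b‖ with hB
  set S := ‖a + b‖ with hS
  have hA0 : 0 ≤ A := norm_nonneg a
  have hB0 : 0 ≤ B := norm_nonneg b
  have hS0 : 0 ≤ S := norm_nonneg _
  have hw1 : (1:ℝ) ≤ 2 ^ α := Real.one_le_rpow (by norm_num) hα.le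
  have hw0 : (0:ℝ) < 2 ^ α := by positivity
  rcases eq_or_lt_of_le hA0 with hA0' | hApos
  · -- A = 0, hence a = b = 0
    have ha : a = 0 := by rwa [eq_comm, norm_eq_zero] at hA0'
    have hb : b = 0 := by
      have : B = 0 := le_antisymm (by rw [← hA0'] at hba; exact hba) hB0
      rwa [norm_eq_zero] at this
    simp [ha, hb]
    positivity
  -- decompose
  have hd : (a + b) * ((S ^ α : ℝ) : ℂ) - a * ((A ^ α : ℝ) : ℂ) - b * ((B ^ α : ℝ) : ℂ)
      = b * ((S ^ α : ℝ) : ℂ) + a * (((S ^ α - A ^ α : ℝ)) : ℂ) - b * ((B ^ α : ℝ) : ℂ) := by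
    push_cast; ring
  rw [hd]
  have hnorm : ‖b * ((S ^ α : ℝ) : ℂ) + a * (((S ^ α - A ^ α : ℝ)) : ℂ) - b * ((B ^ α : ℝ) : ℂ)‖
      ≤ B * S ^ α + A * |S ^ α - A ^ α| + B * B ^ α := by
    refine (norm_sub_le _ _).trans ?_
    gcongr ?_ + ?_
    · refine (norm_add_le _ _).trans ?_
      gcongr ?_ + ?_
      · rw [norm_mul, Complex.norm_real, Real.norm_eq_abs,
          abs_of_nonneg (Real.rpow_nonneg hS0 α)]
      · rw [norm_mul, Complex.norm_real, Real.norm_eq_abs]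
    · rw [norm_mul, Complex.norm_real, Real.norm_eq_abs,
        abs_of_nonneg (Real.rpow_nonneg hB0 α)]
  refine hnorm.trans ?_
  -- basic norm facts
  have hSA : S ≤ 2 * A := by
    calc S ≤ A + B := norm_add_le a b
    _ ≤ 2 * A := by linarith
  have hSAB : |S - A| ≤ B := by
    have := abs_norm_sub_norm_le (a + b) a
    simpa using this
  have hT1 : B * S ^ α ≤ 2 ^ α * (B * A ^ α) := by
    have h1 : S ^ α ≤ (2 * A) ^ α := Real.rpow_le_rpow hS0 hSA hα.le
    have h2 : (2 * A) ^ α = 2 ^ α * A ^ α := Real.mul_rpow (by norm_num) hA0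
    calc B * S ^ α ≤ B * ((2:ℝ) ^ α * A ^ α) := by rw [← h2]; exact mul_le_mul_of_nonneg_left h1 hB0
    _ = 2 ^ α * (B * A ^ α) := by ring
  have hT3 : B * B ^ α ≤ B * A ^ α :=
    mul_le_mul_of_nonneg_left (Real.rpow_le_rpow hB0 hba hα.le) hB0
  have hprod1 : 0 ≤ A * B ^ α := by positivity
  have hprod2 : 0 ≤ B * A ^ α := by positivity
  rcases le_total α 1 with hα1 | hα1
  · -- small exponent: |S^α - A^α| ≤ B^α
    have hT2 : |S ^ α - A ^ α| ≤ B ^ α := by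
      rcases le_total S A with h | h
      · have h1 : A ^ α - S ^ α ≤ (A - S) ^ α := aux_small hα.le hα1 hS0 h
        have h2 : (A - S) ^ α ≤ B ^ α := by
          refine Real.rpow_le_rpow (by linarith) ?_ hα.le
          have : A - S ≤ |S - A| := by rw [abs_sub_comm]; exact le_abs_self _
          linarith
        rw [abs_of_nonpos (by linarith [Real.rpow_le_rpow hS0 h hα.le])]
        linarith
      · have h1 : S ^ α - A ^ α ≤ (S - A) ^ α := aux_small hα.le hα1 hA0 h
        have h2 : (S - A) ^ α ≤ B ^ α := by
          refine Real.rpow_le_rpow (by linarith) ?_ hα.le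
          linarith [le_abs_self (S - A)]
        rw [abs_of_nonneg (by linarith [Real.rpow_le_rpow hA0 h hα.le])]
        linarith
    have hT2' : A * |S ^ α - A ^ α| ≤ A * B ^ α := mul_le_mul_of_nonneg_left hT2 hA0
    nlinarith [hT1, hT2', hT3,
      mul_nonneg (mul_nonneg (by linarith : (0:ℝ) ≤ α + 2) hw0.le) hprod2,
      mul_nonneg (mul_nonneg (by linarith : (0:ℝ) ≤ α + 3) hw0.le) hprod1]
  · -- large exponent
    have hA2 : (0:ℝ) < 2 * A := by linarith
    have hpow : (2 * A) ^ (α - 1) = 2 ^ (α - 1) * A ^ (α - 1) := Real.mul_rpow (by norm_num) hA0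
    have hT2 : |S ^ α - A ^ α| ≤ α * (2 * A) ^ (α - 1) * B := by
      rcases le_total S A with h | h
      · have h1 : A ^ α - S ^ α ≤ α * A ^ (α - 1) * (A - S) := aux_big hα1 hS0 h
        have h2 : A ^ (α - 1) ≤ (2 * A) ^ (α - 1) :=
          Real.rpow_le_rpow hA0 (by linarith) (by linarith)
        have h3 : A - S ≤ B := by
          have : A - S ≤ |S - A| := by rw [abs_sub_comm]; exact le_abs_self _
          linarith
        rw [abs_of_nonpos (by linarith [Real.rpow_le_rpow hS0 h hα.le])]
        have hAS : 0 ≤ A - S := by linarith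
        have h4 : A ^ (α - 1) * (A - S) ≤ (2 * A) ^ (α - 1) * B :=
          mul_le_mul h2 h3 hAS (Real.rpow_nonneg hA2.le _)
        have h5 := mul_le_mul_of_nonneg_left h4 hα.le
        linarith
      · have h1 : S ^ α - A ^ α ≤ α * S ^ (α - 1) * (S - A) := aux_big hα1 hA0 h
        have h2 : S ^ (α - 1) ≤ (2 * A) ^ (α - 1) :=
          Real.rpow_le_rpow hS0 (by linarith) (by linarith)
        have h3 : S - A ≤ B := by linarith [le_abs_self (S - A)]
        rw [abs_of_nonneg (by linarith [Real.rpow_le_rpow hA0 h hα.le])]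
        have hAS : 0 ≤ S - A := by linarith
        have h4 : S ^ (α - 1) * (S - A) ≤ (2 * A) ^ (α - 1) * B :=
          mul_le_mul h2 h3 hAS (Real.rpow_nonneg hA2.le _)
        have h5 := mul_le_mul_of_nonneg_left h4 hα.le
        linarith
    have hAA : A * A ^ (α - 1) = A ^ α := by
      rw [← Real.rpow_one_add' hA0 (by simpa using (by linarith : (1:ℝ) + (α-1) ≠ 0))]
      ring_nf
    have h21 : (2:ℝ) ^ (α - 1) ≤ 2 ^ α :=
      Real.rpow_le_rpow_of_exponent_le (by norm_num) (by linarith)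
    have hT2' : A * |S ^ α - A ^ α| ≤ α * 2 ^ α * (B * A ^ α) := by
      calc A * |S ^ α - A ^ α| ≤ A * (α * (2 * A) ^ (α - 1) * B) :=
            mul_le_mul_of_nonneg_left hT2 hA0
      _ = α * 2 ^ (α - 1) * B * (A * A ^ (α - 1)) := by rw [hpow]; ring
      _ = α * 2 ^ (α - 1) * B * A ^ α := by rw [hAA]
      _ ≤ α * 2 ^ α * (B * A ^ α) := by
          have : α * 2 ^ (α - 1) ≤ α * 2 ^ α := mul_le_mul_of_nonneg_left h21 hα.le
          nlinarith [Real.rpow_nonneg hA0 α, hB0, this]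
    nlinarith [hT1, hT2', hT3, mul_nonneg hw0.le hprod2,
      mul_nonneg (mul_nonneg (by linarith : (0:ℝ) ≤ α + 3) hw0.le) hprod1]

/-- For every `α > 0` there is `C = C(α) > 0` such that for all
complex numbers `a, b`:
`|(a+b)|a+b|^α − a|a|^α − b|b|^α| ≤ C (|a||b|^α + |b||a|^α)`. -/
theorem power_nonlinearity_difference_bound (α : ℝ) (hα : 0 < α) :
    ∃ C > (0:ℝ), ∀ a b : ℂ,
      ‖(a + b) * ((‖a + b‖ ^ α : ℝ) : ℂ) - a * ((‖a‖ ^ α : ℝ) : ℂ) -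
          b * ((‖b‖ ^ α : ℝ) : ℂ)‖ ≤
        C * (‖a‖ * ‖b‖ ^ α + ‖b‖ * ‖a‖ ^ α) := by
  refine ⟨(α + 3) * 2 ^ α + 1, by positivity, fun a b => ?_⟩
  rcases le_total ‖b‖ ‖a‖ with h | h
  · exact aux_key α hα a b h
  · have := aux_key α hα b a h
    rw [add_comm b a] at this
    have he : (a + b) * ((‖a + b‖ ^ α : ℝ) : ℂ) - b * ((‖b‖ ^ α : ℝ) : ℂ) -
        a * ((‖a‖ ^ α : ℝ) : ℂ) = (a + b) * ((‖a + b‖ ^ α : ℝ) : ℂ) -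
        a * ((‖a‖ ^ α : ℝ) : ℂ) - b * ((‖b‖ ^ α : ℝ) : ℂ) := by ring
    rw [he] at this
    calc _ ≤ ((α + 3) * 2 ^ α + 1) * (‖b‖ * ‖a‖ ^ α + ‖a‖ * ‖b‖ ^ α) := this
    _ = _ := by ring
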